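/- Let Γ be a finite abelian group with a nondegenerate alternating bilinear form α : Γ × Γ → ℂˣ. Then there exist subgroups A, B of Γ with Γ = A × B, |A| = |B|, and such that α restricted to A × A and to B × B is trivial (A and B are Lagrangian complements); in particular Γ ≅ A × Â with A ≅ B. -/

import Mathlib

open Subgroup Monoid


private lemma card_sup_disjoint {G : Type*} [CommGroup G] (H K : Subgroup G) (h : Disjoint H K) :
    Nat.card ↥(H ⊔ K) = Nat.card H * Nat.card K := by
  have hb : Function.Bijective (fun p : H × K => (⟨p.1 * p.2,
      mul_mem (mem_sup_left p.1.2) (mem_sup_right p.2.2)⟩ : ↥(H ⊔ K))) := by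
    constructor
    · rintro ⟨⟨a, ha⟩, ⟨b, hb⟩⟩ ⟨⟨c, hc⟩, ⟨d, hd⟩⟩ hab
      simp only [Subtype.mk_eq_mk] at hab
      have key : c⁻¹ * a = d * b⁻¹ := by
        apply mul_right_cancel (b := b)
        rw [mul_assoc, hab, inv_mul_cancel_left, mul_assoc, inv_mul_cancel, mul_one]
      have h1 : c⁻¹ * a ∈ H := mul_mem (inv_mem hc) ha
      have h2 : c⁻¹ * a ∈ K := key ▸ mul_mem hd (inv_mem hb)
      have : c⁻¹ * a = 1 := by
        have := h.le_bot ⟨h1, h2⟩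
        simpa using this
      have hac : a = c := by
        rwa [inv_mul_eq_one, eq_comm] at this
      subst hac
      have : b = d := by
        have := mul_left_cancel hab
        exact this
      simp [this]
    · rintro ⟨g, hg⟩
      rcases Subgroup.mem_sup.mp hg with ⟨y, hy, z, hz, rfl⟩
      exact ⟨(⟨y, hy⟩, ⟨z, hz⟩), rfl⟩
  calc Nat.card ↥(H ⊔ K) = Nat.card (H × K) := (Nat.card_congr (Equiv.ofBijective _ hb)).symm
    _ = Nat.card H * Nat.card K := Nat.card_prod _ _

private lemma isCompl_mulEquiv {G : Type*} [CommGroup G] {A B : Subgroup G} (h : IsCompl A B) :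
    Nonempty (G ≃* A × B) := by
  have hb : Function.Bijective (MonoidHom.coprod A.subtype B.subtype) := by
    constructor
    · rw [injective_iff_map_eq_one]
      rintro ⟨⟨a, ha⟩, ⟨b, hbm⟩⟩ hab
      simp only [MonoidHom.coprod_apply, Subgroup.coe_subtype] at hab
      have h1 : a = b⁻¹ := by rwa [← eq_inv_iff_mul_eq_one] at hab
      have h2 : a ∈ B := h1 ▸ inv_mem hbm
      have : a = 1 := by simpa using h.disjoint.le_bot ⟨ha, h2⟩
      subst this
      simp only [one_mul] at hab
      simp [Prod.ext_iff, Subtype.ext_iff, hab]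
    · intro g
      have : g ∈ A ⊔ B := by rw [h.sup_eq_top]; trivial
      rcases Subgroup.mem_sup.mp this with ⟨y, hy, z, hz, rfl⟩
      exact ⟨(⟨y, hy⟩, ⟨z, hz⟩), rfl⟩
  exact ⟨(MulEquiv.ofBijective _ hb).symm⟩

universe u

private lemma aux : ∀ (n : ℕ) (Γ : Type u) [CommGroup Γ] [Finite Γ] (α : Γ → Γ → ℂˣ),
    (∀ x y z : Γ, α (x * y) z = α x z * α y z) →
    (∀ x y z : Γ, α x (y * z) = α x y * α x z) →
    (∀ x : Γ, α x x = 1) →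
    (∀ x : Γ, (∀ y : Γ, α x y = 1) → x = 1) →
    Nat.card Γ ≤ n →
    ∃ A B : Subgroup Γ, IsCompl A B ∧ Nat.card A = Nat.card B ∧
      (∀ a ∈ A, ∀ a' ∈ A, α a a' = 1) ∧ (∀ b ∈ B, ∀ b' ∈ B, α b b' = 1) := by
  intro n
  induction n with
  | zero =>
    intro Γ _ _ α _ _ _ _ hcard
    have : 0 < Nat.card Γ := Nat.card_pos
    omega
  | succ n ih =>
    intro Γ _ _ α hbil₁ hbil₂ halt hnd hcard
    rcases subsingleton_or_nontrivial Γ with hs | hnt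
    · refine ⟨⊥, ⊥, ⟨disjoint_bot_left, ?_⟩, rfl, ?_, ?_⟩
      · intro C _ _
        intro g _
        have : g = 1 := Subsingleton.elim g 1
        simpa [this] using C.one_mem
      · intro a ha a' ha'
        rw [Subgroup.mem_bot] at ha ha'
        subst ha; subst ha'; exact halt 1
      · intro a ha a' ha'
        rw [Subgroup.mem_bot] at ha ha'
        subst ha; subst ha'; exact halt 1
    · -- the bilinear form as a MonoidHom
      set F : Γ →* Γ →* ℂˣ :=
        MonoidHom.mk' (fun x => MonoidHom.mk' (α x) (fun a b => hbil₂ x a b))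
          (fun a b => MonoidHom.ext (fun c => hbil₁ a b c)) with hF
      have hFα : ∀ u v : Γ, F u v = α u v := fun _ _ => rfl
      have hzpow₁ : ∀ (u v : Γ) (c : ℤ), α (u ^ c) v = α u v ^ c := by
        intro u v c
        rw [← hFα, map_zpow F]
        rfl
      have hzpow₂ : ∀ (u v : Γ) (c : ℤ), α u (v ^ c) = α u v ^ c := by
        intro u v c
        rw [← hFα, map_zpow]
        rfl
      have hskew : ∀ u v : Γ, α v u = (α u v)⁻¹ := by
        intro u v
        have h := halt (u * v)
        rw [hbil₁, hbil₂, hbil₂, halt, halt, one_mul, mul_one] at h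
        exact eq_inv_of_mul_eq_one_right h
      -- choose x of maximal order
      obtain ⟨x, hx⟩ := Monoid.exists_orderOf_eq_exponent (Monoid.ExponentExists.of_finite (G := Γ))
      set e := Monoid.exponent Γ with hedef
      have he1 : 1 < e := Monoid.one_lt_exponent
      set Rx := (F x).range with hRx
      haveI hRxfin : Finite ↥Rx := by
        exact Set.Finite.to_subtype (Set.finite_range _)
      have hexpRx : Monoid.exponent ↥Rx = e := by
        apply Nat.dvd_antisymm
        · apply Monoid.exponent_dvd_of_forall_pow_eq_one
          rintro ⟨-, w, rfl⟩
          have hw : (F x) w ^ e = 1 := by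
            rw [← map_pow, Monoid.pow_exponent_eq_one, map_one]
          apply Subtype.ext
          rw [SubmonoidClass.coe_pow]
          exact hw
        · rw [← hx]
          apply orderOf_dvd_of_pow_eq_one
          apply hnd
          intro w
          have h1 : (⟨F x w, ⟨w, rfl⟩⟩ : ↥Rx) ^ Monoid.exponent ↥Rx = 1 :=
            Monoid.pow_exponent_eq_one _
          have h2 : (F x) w ^ Monoid.exponent ↥Rx = 1 := by
            have := congrArg (Subtype.val) h1
            rwa [SubmonoidClass.coe_pow] at this
          rw [← hFα, map_pow]
          exact h2
      obtain ⟨z', hz'⟩ := Monoid.exists_orderOf_eq_exponent (Monoid.ExponentExists.of_finite (G := ↥Rx))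
      set z : ℂˣ := (z' : ℂˣ) with hzdef
      have hoz : orderOf z = e := by rw [Subgroup.orderOf_coe, hz', hexpRx]
      obtain ⟨y, hy⟩ := z'.2
      -- hy : F x y = z
      haveI hcyc : IsCyclic ↥Rx := subgroup_units_cyclic _
      have hcardRx : Nat.card ↥Rx = e := by rw [← IsCyclic.exponent_eq_card, hexpRx]
      have hztop : Subgroup.zpowers z' = (⊤ : Subgroup ↥Rx) :=
        Subgroup.eq_top_of_card_eq _ (by rw [Nat.card_zpowers, hz', hexpRx, hcardRx])
      have hxw : ∀ w : Γ, ∃ b : ℤ, α x w = z ^ b := by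
        intro w
        have hmem : (⟨F x w, ⟨w, rfl⟩⟩ : ↥Rx) ∈ Subgroup.zpowers z' := by
          rw [hztop]; trivial
        obtain ⟨b, hb⟩ := Subgroup.mem_zpowers_iff.mp hmem
        refine ⟨b, ?_⟩
        rw [← hFα]
        have h := congrArg (Subtype.val) hb
        rw [SubgroupClass.coe_zpow] at h
        exact h.symm
      have hxy : α x y = z := hy
      have hyx : α y x = z⁻¹ := by rw [hskew, hxy]
      have hordy : orderOf y = e := by
        apply Nat.dvd_antisymm (Monoid.order_dvd_exponent y)
        rw [← hedef, ← hoz]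
        apply orderOf_dvd_of_pow_eq_one
        rw [← hxy, ← hFα, ← map_pow, pow_orderOf_eq_one, map_one]
      set Ry := (F y).range with hRy
      haveI hRyfin : Finite ↥Ry := Set.Finite.to_subtype (Set.finite_range _)
      have hzinv : z⁻¹ ∈ Ry := ⟨x, hyx⟩
      have hexpRy : Monoid.exponent ↥Ry = e := by
        apply Nat.dvd_antisymm
        · apply Monoid.exponent_dvd_of_forall_pow_eq_one
          rintro ⟨-, w, rfl⟩
          have hw : (F y) w ^ e = 1 := by
            rw [← map_pow, Monoid.pow_exponent_eq_one, map_one]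
          apply Subtype.ext
          rw [SubmonoidClass.coe_pow]
          exact hw
        · have : orderOf (⟨z⁻¹, hzinv⟩ : ↥Ry) = e := by
            rw [Subgroup.orderOf_mk, orderOf_inv, hoz]
          rw [← this]
          exact Monoid.order_dvd_exponent _
      haveI hcycy : IsCyclic ↥Ry := subgroup_units_cyclic _
      have hcardRy : Nat.card ↥Ry = e := by rw [← IsCyclic.exponent_eq_card, hexpRy]
      have hztopy : Subgroup.zpowers (⟨z⁻¹, hzinv⟩ : ↥Ry) = ⊤ :=
        Subgroup.eq_top_of_card_eq _
          (by rw [Nat.card_zpowers, Subgroup.orderOf_mk, orderOf_inv, hoz, hcardRy])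
      have hyw : ∀ w : Γ, ∃ a : ℤ, α y w = z ^ a := by
        intro w
        have hmem : (⟨F y w, ⟨w, rfl⟩⟩ : ↥Ry) ∈ Subgroup.zpowers (⟨z⁻¹, hzinv⟩ : ↥Ry) := by
          rw [hztopy]; trivial
        obtain ⟨a, ha⟩ := Subgroup.mem_zpowers_iff.mp hmem
        refine ⟨-a, ?_⟩
        rw [← hFα]
        have h := congrArg (Subtype.val) ha
        rw [SubgroupClass.coe_zpow] at h
        -- h : (↑⟨z⁻¹,_⟩ : ℂˣ) ^ a = ↑⟨F y w, _⟩
        have h2 : z⁻¹ ^ a = (F y) w := h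
        rw [← h2, zpow_neg, inv_zpow]
      set K : Subgroup Γ := (F x).ker ⊓ (F y).ker with hK
      have hKmem : ∀ {g : Γ}, g ∈ K ↔ α x g = 1 ∧ α y g = 1 := fun {g} => Subgroup.mem_inf
      have hdecomp : ∀ w : Γ, ∃ (c d : ℤ) (k : Γ), k ∈ K ∧ w = x ^ c * y ^ d * k := by
        intro w
        obtain ⟨b, hbw⟩ := hxw w
        obtain ⟨a, haw⟩ := hyw w
        refine ⟨-a, b, (x ^ (-a) * y ^ b)⁻¹ * w, ?_, by group⟩
        rw [hKmem]
        constructor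
        · show (F x) ((x ^ (-a) * y ^ b)⁻¹ * w) = 1
          rw [map_mul, map_inv, map_mul, map_zpow, map_zpow]
          simp only [hFα]
          rw [halt, hxy, hbw]
          group
        · show (F y) ((x ^ (-a) * y ^ b)⁻¹ * w) = 1
          rw [map_mul, map_inv, map_mul, map_zpow, map_zpow]
          simp only [hFα]
          rw [halt, hyx, haw]
          group
      have hyK : y ∉ K := by
        intro hmem
        have h1 := (hKmem.mp hmem).1
        rw [hxy] at h1
        rw [h1, orderOf_one] at hoz
        omega
      have hKcard : Nat.card ↥K ≤ n := by
        have hle : Nat.card ↥K ≤ Nat.card Γ :=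
          Nat.card_le_card_of_injective _ K.subtype_injective
        have hne : Nat.card ↥K ≠ Nat.card Γ := by
          intro h
          exact hyK (by rw [Subgroup.eq_top_of_card_eq K h]; trivial)
        omega
      obtain ⟨A', B', hcompl', hcard', htrivA', htrivB'⟩ :=
        ih ↥K (fun g h => α g h)
          (fun g h k => by push_cast; exact hbil₁ _ _ _)
          (fun g h k => by push_cast; exact hbil₂ _ _ _)
          (fun g => halt g)
          (fun g hg => by
            apply Subtype.ext
            apply hnd
            intro w
            obtain ⟨c, d, k, hk, rfl⟩ := hdecomp w
            have hgx : α (↑g) x = 1 := by rw [hskew, (hKmem.mp g.2).1, inv_one]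
            have hgy : α (↑g) y = 1 := by rw [hskew, (hKmem.mp g.2).2, inv_one]
            have hgk : α (↑g) k = 1 := hg ⟨k, hk⟩
            show (F ↑g) (x ^ c * y ^ d * k) = 1
            rw [map_mul, map_mul, map_zpow, map_zpow]
            simp only [hFα]
            rw [hgx, hgy, hgk]
            simp)
          hKcard
      set A : Subgroup Γ := Subgroup.zpowers x ⊔ A'.map K.subtype with hA
      set B : Subgroup Γ := Subgroup.zpowers y ⊔ B'.map K.subtype with hB
      have hmapK : ∀ {S : Subgroup ↥K} {g : Γ}, g ∈ S.map K.subtype → g ∈ K := by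
        rintro S g ⟨k, hk, rfl⟩; exact k.2
      have hmemA : ∀ g ∈ A, ∃ (c : ℤ) (k : Γ), k ∈ A'.map K.subtype ∧ g = x ^ c * k := by
        intro g hg
        rcases Subgroup.mem_sup.mp hg with ⟨u, hu, k, hk, rfl⟩
        rcases Subgroup.mem_zpowers_iff.mp hu with ⟨c, rfl⟩
        exact ⟨c, k, hk, rfl⟩
      have hmemB : ∀ g ∈ B, ∃ (d : ℤ) (k : Γ), k ∈ B'.map K.subtype ∧ g = y ^ d * k := by
        intro g hg
        rcases Subgroup.mem_sup.mp hg with ⟨u, hu, k, hk, rfl⟩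
        rcases Subgroup.mem_zpowers_iff.mp hu with ⟨d, rfl⟩
        exact ⟨d, k, hk, rfl⟩
      have htrivA : ∀ a ∈ A, ∀ a' ∈ A, α a a' = 1 := by
        intro a ha a' ha'
        obtain ⟨c, k, hk, rfl⟩ := hmemA a ha
        obtain ⟨c', k', hk', rfl⟩ := hmemA a' ha'
        have hkK := hmapK hk
        have hk'K := hmapK hk'
        have e1 : α (x ^ c) (x ^ c') = 1 := by
          rw [hzpow₁, hzpow₂, halt, one_zpow, one_zpow]
        have e2 : α (x ^ c) k' = 1 := by rw [hzpow₁, (hKmem.mp hk'K).1, one_zpow]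
        have e3 : α k (x ^ c') = 1 := by
          rw [hzpow₂, hskew, (hKmem.mp hkK).1, inv_one, one_zpow]
        have e4 : α k k' = 1 := by
          obtain ⟨k₀, hk₀, rfl⟩ := hk
          obtain ⟨k₀', hk₀', rfl⟩ := hk'
          exact htrivA' k₀ hk₀ k₀' hk₀'
        rw [hbil₁, hbil₂, hbil₂, e1, e2, e3, e4]
        simp
      have htrivB : ∀ b ∈ B, ∀ b' ∈ B, α b b' = 1 := by
        intro b hb b' hb'
        obtain ⟨d, k, hk, rfl⟩ := hmemB b hb
        obtain ⟨d', k', hk', rfl⟩ := hmemB b' hb'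
        have hkK := hmapK hk
        have hk'K := hmapK hk'
        have e1 : α (y ^ d) (y ^ d') = 1 := by
          rw [hzpow₁, hzpow₂, halt, one_zpow, one_zpow]
        have e2 : α (y ^ d) k' = 1 := by rw [hzpow₁, (hKmem.mp hk'K).2, one_zpow]
        have e3 : α k (y ^ d') = 1 := by
          rw [hzpow₂, hskew, (hKmem.mp hkK).2, inv_one, one_zpow]
        have e4 : α k k' = 1 := by
          obtain ⟨k₀, hk₀, rfl⟩ := hk
          obtain ⟨k₀', hk₀', rfl⟩ := hk'
          exact htrivB' k₀ hk₀ k₀' hk₀'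
        rw [hbil₁, hbil₂, hbil₂, e1, e2, e3, e4]
        simp
      have hdisj : Disjoint A B := by
        rw [disjoint_iff_inf_le]
        rintro g ⟨hgA, hgB⟩
        obtain ⟨c, k, hk, hgk⟩ := hmemA g hgA
        obtain ⟨d, k', hk', hgk'⟩ := hmemB g hgB
        have hkK := hmapK hk
        have hk'K := hmapK hk'
        have h1 : α x g = 1 := by
          rw [hgk, hbil₂, hzpow₂, halt, one_zpow, (hKmem.mp hkK).1, mul_one]
        have h2 : α x g = z ^ d := by
          rw [hgk', hbil₂, hzpow₂, hxy, (hKmem.mp hk'K).1, mul_one]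
        have hzd : z ^ d = 1 := by rw [← h2, h1]
        have hyd : y ^ d = 1 := by
          have hdvd : (orderOf z : ℤ) ∣ d := orderOf_dvd_iff_zpow_eq_one.mpr hzd
          rw [hoz, ← hordy] at hdvd
          exact orderOf_dvd_iff_zpow_eq_one.mp hdvd
        have h3 : α y g = 1 := by
          rw [hgk', hbil₂, hzpow₂, halt, one_zpow, (hKmem.mp hk'K).2, mul_one]
        have h4 : α y g = z ^ (-c) := by
          rw [hgk, hbil₂, hzpow₂, hyx, (hKmem.mp hkK).2, mul_one]
          group
        have hzc : z ^ (-c) = 1 := by rw [← h4, h3]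
        have hxc : x ^ c = 1 := by
          have hdvd : (orderOf z : ℤ) ∣ (-c) := orderOf_dvd_iff_zpow_eq_one.mpr hzc
          rw [hoz, ← hx] at hdvd
          exact orderOf_dvd_iff_zpow_eq_one.mp (dvd_neg.mp hdvd)
        rw [hxc, one_mul] at hgk
        rw [hyd, one_mul] at hgk'
        obtain ⟨a₀, ha₀, hae⟩ := hk
        obtain ⟨b₀, hb₀, hbe⟩ := hk'
        have hab : a₀ = b₀ := Subtype.ext (by
          rw [show ((a₀ : Γ)) = k from hae, show ((b₀ : Γ)) = k' from hbe, ← hgk, ← hgk'])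
        have hmem0 : a₀ ∈ A' ⊓ B' := ⟨ha₀, hab ▸ hb₀⟩
        have ha1 : a₀ = 1 := by simpa using hcompl'.disjoint.le_bot hmem0
        rw [Subgroup.mem_bot, hgk, ← show ((a₀ : Γ)) = k from hae, ha1]
        simp
      have hcodis : Codisjoint A B := by
        rw [codisjoint_iff_le_sup]
        intro w _
        obtain ⟨c, d, k, hkK2, rfl⟩ := hdecomp w
        have hktop : (⟨k, hkK2⟩ : ↥K) ∈ A' ⊔ B' := by rw [hcompl'.sup_eq_top]; trivial
        rcases Subgroup.mem_sup.mp hktop with ⟨a₀, ha₀, b₀, hb₀, habk⟩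
        have hks : k = (↑a₀ : Γ) * ↑b₀ := (congrArg Subtype.val habk).symm
        rw [hks]
        have hxA : x ^ c ∈ A := Subgroup.mem_sup_left (Subgroup.mem_zpowers_iff.mpr ⟨c, rfl⟩)
        have haA : (↑a₀ : Γ) ∈ A := Subgroup.mem_sup_right ⟨a₀, ha₀, rfl⟩
        have hyB : y ^ d ∈ B := Subgroup.mem_sup_left (Subgroup.mem_zpowers_iff.mpr ⟨d, rfl⟩)
        have hbB : (↑b₀ : Γ) ∈ B := Subgroup.mem_sup_right ⟨b₀, hb₀, rfl⟩
        rw [mul_mul_mul_comm]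
        exact mul_mem (Subgroup.mem_sup_left (mul_mem hxA haA))
          (Subgroup.mem_sup_right (mul_mem hyB hbB))
      have hdxA : Disjoint (Subgroup.zpowers x) (A'.map K.subtype) := by
        rw [disjoint_iff_inf_le]
        rintro g ⟨hg1, hg2⟩
        obtain ⟨c, rfl⟩ := Subgroup.mem_zpowers_iff.mp hg1
        have hgK := hmapK hg2
        have h4 : α y (x ^ c) = z ^ (-c) := by rw [hzpow₂, hyx]; group
        have hzc : z ^ (-c) = 1 := by rw [← h4, (hKmem.mp hgK).2]
        have hdvd : (orderOf z : ℤ) ∣ (-c) := orderOf_dvd_iff_zpow_eq_one.mpr hzc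
        rw [hoz, ← hx] at hdvd
        rw [Subgroup.mem_bot]
        exact orderOf_dvd_iff_zpow_eq_one.mp (dvd_neg.mp hdvd)
      have hdyB : Disjoint (Subgroup.zpowers y) (B'.map K.subtype) := by
        rw [disjoint_iff_inf_le]
        rintro g ⟨hg1, hg2⟩
        obtain ⟨d, rfl⟩ := Subgroup.mem_zpowers_iff.mp hg1
        have hgK := hmapK hg2
        have h4 : α x (y ^ d) = z ^ d := by rw [hzpow₂, hxy]
        have hzd : z ^ d = 1 := by rw [← h4, (hKmem.mp hgK).1]
        have hdvd : (orderOf z : ℤ) ∣ d := orderOf_dvd_iff_zpow_eq_one.mpr hzd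
        rw [hoz, ← hordy] at hdvd
        rw [Subgroup.mem_bot]
        exact orderOf_dvd_iff_zpow_eq_one.mp hdvd
      have hmapcardA : Nat.card ↥(A'.map K.subtype) = Nat.card ↥A' :=
        (Nat.card_congr (Subgroup.equivMapOfInjective A' K.subtype
          K.subtype_injective).toEquiv).symm
      have hmapcardB : Nat.card ↥(B'.map K.subtype) = Nat.card ↥B' :=
        (Nat.card_congr (Subgroup.equivMapOfInjective B' K.subtype
          K.subtype_injective).toEquiv).symm
      have hcA : Nat.card ↥A = e * Nat.card ↥A' := by
        rw [hA, card_sup_disjoint _ _ hdxA, Nat.card_zpowers, hx, hmapcardA]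
      have hcB : Nat.card ↥B = e * Nat.card ↥B' := by
        rw [hB, card_sup_disjoint _ _ hdyB, Nat.card_zpowers, hordy, hmapcardB]
      exact ⟨A, B, ⟨hdisj, hcodis⟩, by rw [hcA, hcB, hcard'], htrivA, htrivB⟩


theorem stmt_8 (Γ : Type*) [CommGroup Γ] [Fintype Γ] (α : Γ → Γ → ℂˣ)
    (hbil₁ : ∀ x y z : Γ, α (x * y) z = α x z * α y z)
    (hbil₂ : ∀ x y z : Γ, α x (y * z) = α x y * α x z)
    (halt : ∀ x : Γ, α x x = 1)
    (hnd : ∀ x : Γ, (∀ y : Γ, α x y = 1) → x = 1) :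
    ∃ A B : Subgroup Γ, IsCompl A B ∧ Nat.card A = Nat.card B ∧
      (∀ a ∈ A, ∀ a' ∈ A, α a a' = 1) ∧
      (∀ b ∈ B, ∀ b' ∈ B, α b b' = 1) ∧
      Nonempty (Γ ≃* A × B) := by
  obtain ⟨A, B, hc, hcard, hA, hB⟩ :=
    aux (Nat.card Γ) Γ α hbil₁ hbil₂ halt hnd le_rfl
  exact ⟨A, B, hc, hcard, hA, hB, isCompl_mulEquiv hc⟩
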